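/- arXiv:2312.05089 — 5 statements merged into one kernel-verified Lean document; each statement's English description precedes it below -/
import Mathlib

section
/- For every complex number z, the cardinal sine function satisfies |sinc(z)| ≤ exp(|Im z|), where sinc(z) = sin(z)/z for z ≠ 0 and sinc(0) = 1. -/
open Complex

lemma sinh_le_mul_exp (t : ℝ) (ht : 0 ≤ t) : Real.sinh t ≤ t * Real.exp t := by
  rw [Real.sinh_eq]
  have h1 : (1 : ℝ) + (-2 * t) ≤ Real.exp (-2 * t) := by
    linarith [Real.add_one_le_exp (-2 * t)]
  have h2 : Real.exp (-2 * t) * Real.exp t = Real.exp (-t) := by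
    rw [← Real.exp_add]; ring_nf
  nlinarith [Real.exp_pos t, Real.exp_pos (-t)]

lemma sin_abs_le (z : ℂ) : ‖Complex.sin z‖ ≤ ‖z‖ * Real.exp |z.im| := by
  set x := z.re
  set y := z.im
  have hre : Complex.sin z =
      (Real.sin x * Real.cosh y : ℝ) + (Real.cos x * Real.sinh y : ℝ) * I := by
    rw [show z = (x : ℂ) + (y : ℂ) * I from (Complex.re_add_im z).symm, Complex.sin_add,
      Complex.sin_mul_I, Complex.cos_mul_I]
    push_cast
    ring
  have h1 : ‖Complex.sin z‖ ^ 2 =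
      Real.sin x ^ 2 * Real.cosh y ^ 2 + Real.cos x ^ 2 * Real.sinh y ^ 2 := by
    rw [hre, Complex.sq_norm, Complex.normSq_add_mul_I]
    ring
  have h2 : Real.sin x ^ 2 * Real.cosh y ^ 2 + Real.cos x ^ 2 * Real.sinh y ^ 2 =
      Real.sin x ^ 2 + Real.sinh y ^ 2 := by
    have := Real.sin_sq_add_cos_sq x
    have := Real.cosh_sq y
    nlinarith
  have hsin : Real.sin x ^ 2 ≤ x ^ 2 := by
    have h := (Real.abs_sin_le_abs : |Real.sin x| ≤ |x|)
    nlinarith [abs_nonneg x, abs_nonneg (Real.sin x), _root_.sq_abs x, _root_.sq_abs (Real.sin x)]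
  have hsinh : Real.sinh y ^ 2 ≤ y ^ 2 * Real.exp |y| ^ 2 := by
    have h3 : |Real.sinh y| = Real.sinh |y| := Real.abs_sinh y
    have h4 : Real.sinh |y| ≤ |y| * Real.exp |y| := sinh_le_mul_exp |y| (abs_nonneg y)
    nlinarith [abs_nonneg y, Real.exp_pos |y|, _root_.sq_abs y, _root_.sq_abs (Real.sinh y),
      abs_nonneg (Real.sinh y)]
  have hexp1 : (1 : ℝ) ≤ Real.exp |y| := Real.one_le_exp (abs_nonneg y)
  have hkey : ‖Complex.sin z‖ ^ 2 ≤ (‖z‖ * Real.exp |y|) ^ 2 := by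
    have hz2 : ‖z‖ ^ 2 = x ^ 2 + y ^ 2 := by
      rw [Complex.sq_norm, Complex.normSq_apply]; ring
    rw [h1, h2]
    nlinarith [hz2, hsin, hsinh, hexp1, Real.exp_pos |y|, sq_nonneg x, sq_nonneg y,
      sq_nonneg (Real.exp |y| - 1)]
  have h5 := Real.sqrt_le_sqrt hkey
  rw [Real.sqrt_sq (norm_nonneg _), Real.sqrt_sq (by positivity)] at h5
  exact h5

theorem sinc_abs_le (sinc : ℂ → ℂ) (h0 : sinc 0 = 1)
    (hs : ∀ z : ℂ, z ≠ 0 → sinc z = Complex.sin z / z) :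
    ∀ z : ℂ, ‖sinc z‖ ≤ Real.exp |z.im| := by
  intro z
  by_cases hz : z = 0
  · subst hz
    simp [h0, Real.one_le_exp (abs_nonneg _)]
  · rw [hs z hz, norm_div]
    rw [div_le_iff₀ (by simpa using (norm_pos_iff.mpr hz))]
    have := sin_abs_le z
    linarith [sin_abs_le z, mul_comm ‖z‖ (Real.exp |z.im|)]
end

section
/- For every real number a, every complex number z, every real ξ ∈ [0,1] and every positive integer N, one has |((1+a)/2)·exp((iz/N)(1−ξ/N)) + ((1−a)/2)·exp(−(iz/N)(1−ξ/N))| ≤ (1 + |a|·|z|/N)·exp(|Im z|/N). -/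
open Complex

lemma abs_cosh_le (u : ℂ) : ‖Complex.cosh u‖ ≤ Real.exp |u.re| := by
  rw [Complex.cosh]
  calc ‖(Complex.exp u + Complex.exp (-u)) / 2‖
      ≤ (‖Complex.exp u‖ + ‖Complex.exp (-u)‖) / 2 := by
        rw [norm_div, Complex.norm_two]
        gcongr
        exact norm_add_le _ _
    _ = (Real.exp u.re + Real.exp (-u.re)) / 2 := by
        rw [Complex.norm_exp, Complex.norm_exp, Complex.neg_re]
    _ ≤ (Real.exp |u.re| + Real.exp |u.re|) / 2 := by
        gcongr <;> [exact le_abs_self _; exact neg_le_abs _]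
    _ = Real.exp |u.re| := by ring

lemma abs_sinh_le (u : ℂ) : ‖Complex.sinh u‖ ≤ ‖u‖ * Real.exp |u.re| := by
  have hderiv : ∀ t ∈ Set.uIcc (0:ℝ) 1,
      HasDerivAt (fun s : ℝ => Complex.sinh (s * u)) (u * Complex.cosh (t * u)) t := by
    intro t _
    have h1 : HasDerivAt (fun s : ℂ => Complex.sinh (s * u)) (Complex.cosh (t * u) * u) t := by
      simpa [Function.comp_def] using (Complex.hasDerivAt_sinh ((t:ℂ) * u)).comp (t:ℂ)
        ((hasDerivAt_id (t:ℂ)).mul_const u)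
    simpa [mul_comm] using h1.comp_ofReal
  have hint : IntervalIntegrable (fun t : ℝ => u * Complex.cosh (t * u))
      MeasureTheory.volume 0 1 := by
    apply Continuous.intervalIntegrable
    continuity
  have heq : Complex.sinh u = ∫ t in (0:ℝ)..1, u * Complex.cosh (t * u) := by
    have := intervalIntegral.integral_eq_sub_of_hasDerivAt hderiv hint
    simpa using this.symm
  rw [heq]
  have := intervalIntegral.norm_integral_le_of_norm_le_const
    (C := ‖u‖ * Real.exp |u.re|) (a := (0:ℝ)) (b := 1)
    (f := fun t : ℝ => u * Complex.cosh (t * u)) ?_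
  · simpa using this
  · intro t ht
    rw [Set.uIoc_of_le (by norm_num : (0:ℝ) ≤ 1)] at ht
    have ht0 : 0 < t := ht.1
    have ht1 : t ≤ 1 := ht.2
    show ‖u * Complex.cosh (t * u)‖ ≤ _
    rw [norm_mul]
    gcongr
    calc ‖Complex.cosh ((t:ℂ) * u)‖ ≤ Real.exp |((t:ℂ) * u).re| := abs_cosh_le _
      _ ≤ Real.exp |u.re| := by
          apply Real.exp_le_exp.2
          have : ((t:ℂ) * u).re = t * u.re := by simp
          rw [this, abs_mul, abs_of_pos ht0]
          nlinarith [abs_nonneg u.re]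

theorem factor_abs_bound (a : ℝ) (z : ℂ) (ξ : ℝ) (hξ : ξ ∈ Set.Icc (0:ℝ) 1)
    (N : ℕ) (hN : 1 ≤ N) :
    ‖(((1 + a : ℝ) / 2 : ℂ) * Complex.exp ((Complex.I * z / N) * (1 - (ξ : ℂ) / N))
      + ((1 - a : ℝ) / 2 : ℂ) * Complex.exp (-((Complex.I * z / N) * (1 - (ξ : ℂ) / N))))‖
      ≤ (1 + |a| * ‖z‖ / N) * Real.exp (|z.im| / N) := by
  have hN0 : (0:ℝ) < N := by exact_mod_cast Nat.lt_of_lt_of_le Nat.zero_lt_one hN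
  have hN1 : (1:ℝ) ≤ N := by exact_mod_cast hN
  obtain ⟨hξ0, hξ1⟩ := hξ
  set c : ℝ := 1 - ξ / N with hc
  have hc0 : 0 ≤ c := by
    rw [hc]
    have : ξ / N ≤ 1 := div_le_one_of_le₀ (by linarith) (le_of_lt hN0)
    linarith
  have hc1 : c ≤ 1 := by
    rw [hc]
    have : 0 ≤ ξ / N := div_nonneg hξ0 (le_of_lt hN0)
    linarith
  set u : ℂ := Complex.I * z / N * (1 - (ξ : ℂ) / N) with hu
  have hu2 : u = ((c / N : ℝ) : ℂ) * (Complex.I * z) := by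
    rw [hu, hc]; push_cast; ring
  have hre : |u.re| ≤ |z.im| / N := by
    have h1 : u.re = c / N * (-z.im) := by
      rw [hu2, Complex.re_ofReal_mul]
      simp [Complex.mul_re]
    rw [h1, abs_mul, abs_neg, _root_.abs_of_nonneg (div_nonneg hc0 (le_of_lt hN0))]
    rw [div_mul_eq_mul_div, div_le_div_iff₀ hN0 hN0]
    nlinarith [mul_nonneg (mul_nonneg (sub_nonneg.2 hc1) (abs_nonneg z.im)) hN0.le]
  have habsu : ‖u‖ ≤ ‖z‖ / N := by
    have h1 : ‖u‖ = c / N * ‖z‖ := by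
      rw [hu2, norm_mul, norm_mul, Complex.norm_real, Complex.norm_I, one_mul, Real.norm_eq_abs,
        _root_.abs_of_nonneg (div_nonneg hc0 (le_of_lt hN0))]
    rw [h1, div_mul_eq_mul_div, div_le_div_iff₀ hN0 hN0]
    nlinarith [mul_nonneg (mul_nonneg (sub_nonneg.2 hc1) (norm_nonneg z)) hN0.le]
  have hid : (((1 + a : ℝ) / 2 : ℂ) * Complex.exp u + ((1 - a : ℝ) / 2 : ℂ) * Complex.exp (-u))
      = Complex.cosh u + (a : ℂ) * Complex.sinh u := by
    rw [Complex.cosh, Complex.sinh]; push_cast; ring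
  rw [hid]
  calc ‖Complex.cosh u + (a : ℂ) * Complex.sinh u‖
      ≤ ‖Complex.cosh u‖ + ‖(a:ℂ) * Complex.sinh u‖ :=
        norm_add_le _ _
    _ = ‖Complex.cosh u‖ + |a| * ‖Complex.sinh u‖ := by
        rw [norm_mul, Complex.norm_real, Real.norm_eq_abs]
    _ ≤ Real.exp |u.re| + |a| * (‖u‖ * Real.exp |u.re|) := by
        gcongr
        · exact abs_cosh_le u
        · exact abs_sinh_le u
    _ = (1 + |a| * ‖u‖) * Real.exp |u.re| := by ring
    _ ≤ (1 + |a| * ‖z‖ / N) * Real.exp (|z.im| / N) := by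
        have h2 : |a| * ‖u‖ ≤ |a| * ‖z‖ / N := by
          rw [mul_div_assoc]
          gcongr
        gcongr
end

section
/- Let a ∈ ℝ, z ∈ ℂ, N ≥ 1, and let h_0,…,h_N be distinct points in [−1,1]. Let Γ be the circle of radius |a|+2 centered at 0. Then |exp(iaz) − Σ_{ν=0}^N (∏_{ν'≠ν} (a−h_{ν'})/(h_ν−h_{ν'}))·exp(i·h_ν·z)| ≤ ((|a|+2)/2)·exp((|a|+2)·|z|)·((|a|+1)/(|a|+1))^{N+1}, and in particular is bounded by ((|a|+2)/2)·exp((|a|+2)·|z|). -/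
open Complex Finset

section HermiteAux

open Polynomial Metric Real


lemma partial_fraction {s : Finset ℕ} (hs : s.Nonempty) {v : ℕ → ℂ} (hv : Set.InjOn v s)
    (ζ b : ℂ) (hζ : ∀ i ∈ s, ζ ≠ v i) (hζb : ζ ≠ b) :
    (ζ - b)⁻¹ - ∑ i ∈ s, (∏ j ∈ s.erase i, ((b - v j) / (v i - v j))) * (ζ - v i)⁻¹
      = (∏ i ∈ s, (b - v i)) / ((∏ i ∈ s, (ζ - v i)) * (ζ - b)) := by
  classical
  set ω : Polynomial ℂ := Lagrange.nodal s v with hω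
  obtain ⟨q, hq⟩ := (Polynomial.X_sub_C_dvd_sub_C_eval (a := ζ) (p := ω))
  -- degree of q
  have hdegω : (ω - C (ω.eval ζ)).degree = (#s : WithBot ℕ) := by
    rw [Polynomial.degree_sub_eq_left_of_degree_lt, Lagrange.degree_nodal]
    rw [Lagrange.degree_nodal]
    exact lt_of_le_of_lt (Polynomial.degree_C_le) (by exact_mod_cast Nat.cast_pos.mpr hs.card_pos)
  have hq' : ω - C (ω.eval ζ) = (X - C ζ) * q := hq
  have hqdeg : q.degree < (#s : WithBot ℕ) := by
    by_cases hq0 : q = 0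
    · simp only [hq0, Polynomial.degree_zero]
      exact WithBot.bot_lt_coe _
    · have := hdegω
      rw [hq', Polynomial.degree_mul, Polynomial.degree_X_sub_C] at this
      have hqd : q.degree = ((#s - 1 : ℕ) : WithBot ℕ) := by
        rw [Polynomial.degree_eq_natDegree hq0] at this ⊢
        have : (1 : ℕ) + q.natDegree = #s := by exact_mod_cast this
        rw [Nat.cast_inj.mpr (by omega : q.natDegree = #s - 1)]
      rw [hqd]
      exact_mod_cast Nat.sub_lt hs.card_pos one_pos
  have hinterp := Lagrange.eq_interpolate (v := v) hv (f := q) (by simpa using hqdeg)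
  -- evaluate interpolate at b
  have heval : q.eval b = ∑ i ∈ s, q.eval (v i) *
      ∏ j ∈ s.erase i, ((v i - v j)⁻¹ * (b - v j)) := by
    conv_lhs => rw [hinterp]
    rw [Lagrange.interpolate_apply, Polynomial.eval_finset_sum]
    refine Finset.sum_congr rfl fun i hi => ?_
    rw [Polynomial.eval_mul, Polynomial.eval_C, Lagrange.basis, Polynomial.eval_prod]
    congr 1
    refine Finset.prod_congr rfl fun j hj => ?_
    simp [Lagrange.basisDivisor]
  have hωζ : Polynomial.eval ζ ω ≠ 0 := Lagrange.eval_nodal_not_at_node hζ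
  have hzvi : ∀ i ∈ s, ζ - v i ≠ 0 := fun i hi => sub_ne_zero.mpr (hζ i hi)
  have hqvi : ∀ i ∈ s, q.eval (v i) = Polynomial.eval ζ ω * (ζ - v i)⁻¹ := by
    intro i hi
    have h0 : Polynomial.eval (v i) ω = 0 := Lagrange.eval_nodal_at_node hi
    have h1 := congrArg (Polynomial.eval (v i)) hq
    simp only [Polynomial.eval_sub, Polynomial.eval_mul, Polynomial.eval_C, Polynomial.eval_X,
      h0] at h1
    rw [eq_comm, mul_inv_eq_iff_eq_mul₀ (hzvi i hi)]
    linear_combination -h1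
  have hsum : q.eval b = Polynomial.eval ζ ω *
      ∑ i ∈ s, (∏ j ∈ s.erase i, ((b - v j) / (v i - v j))) * (ζ - v i)⁻¹ := by
    rw [heval, Finset.mul_sum]
    refine Finset.sum_congr rfl fun i hi => ?_
    rw [hqvi i hi, show (∏ j ∈ s.erase i, ((b - v j) / (v i - v j)))
        = ∏ j ∈ s.erase i, ((v i - v j)⁻¹ * (b - v j)) from
      Finset.prod_congr rfl fun j _ => by rw [div_eq_inv_mul]]
    ring
  have hqb : q.eval b * (ζ - b) = Polynomial.eval ζ ω - Polynomial.eval b ω := by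
    have h1 := congrArg (Polynomial.eval b) hq
    simp only [Polynomial.eval_sub, Polynomial.eval_mul, Polynomial.eval_C,
      Polynomial.eval_X] at h1
    linear_combination h1
  have hωb : Polynomial.eval b ω = ∏ i ∈ s, (b - v i) := Lagrange.eval_nodal
  have hωζ2 : Polynomial.eval ζ ω = ∏ i ∈ s, (ζ - v i) := Lagrange.eval_nodal
  have hzb : ζ - b ≠ 0 := sub_ne_zero.mpr hζb
  rw [← hωb, ← hωζ2]
  set S := ∑ i ∈ s, (∏ j ∈ s.erase i, ((b - v j) / (v i - v j))) * (ζ - v i)⁻¹ with hS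
  have hS2 : S = q.eval b * (Polynomial.eval ζ ω)⁻¹ := by
    rw [hsum]; field_simp
  rw [hS2, eq_div_iff (mul_ne_zero hωζ hzb)]
  rw [sub_mul, show (ζ - b)⁻¹ * (Polynomial.eval ζ ω * (ζ - b)) = Polynomial.eval ζ ω by
      rw [mul_comm, mul_assoc, mul_inv_cancel₀ hzb, mul_one],
    show Polynomial.eval b q * (Polynomial.eval ζ ω)⁻¹ * (Polynomial.eval ζ ω * (ζ - b))
      = Polynomial.eval b q * (ζ - b) by
      rw [mul_assoc, ← mul_assoc (Polynomial.eval ζ ω)⁻¹, inv_mul_cancel₀ hωζ, one_mul]]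
  linear_combination -hqb


lemma circleIntegral_finset_sum' {ι : Type*} (s : Finset ι) (f : ι → ℂ → ℂ) (c : ℂ) (R : ℝ)
    (h : ∀ i ∈ s, CircleIntegrable (f i) c R) :
    (∮ z in C(c, R), ∑ i ∈ s, f i z) = ∑ i ∈ s, ∮ z in C(c, R), f i z := by
  simp only [circleIntegral, Finset.smul_sum]
  rw [intervalIntegral.integral_finset_sum (fun i hi => (h i hi).out)]

lemma hermite_remainder_bound_aux (a : ℝ) (z : ℂ) (N : ℕ) (h : ℕ → ℝ)
    (hmem : ∀ ν ∈ Finset.range (N + 1), h ν ∈ Set.Icc (-1 : ℝ) 1)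
    (hdist : ∀ ν ∈ Finset.range (N + 1), ∀ ν' ∈ Finset.range (N + 1),
      ν ≠ ν' → h ν ≠ h ν') :
    ‖(Complex.exp (Complex.I * a * z)
      - ∑ ν ∈ Finset.range (N + 1),
          ((∏ ν' ∈ (Finset.range (N + 1)).erase ν, ((a - h ν') / (h ν - h ν') : ℂ))
            * Complex.exp (Complex.I * (h ν) * z)))‖
      ≤ ((|a| + 2) / 2) * Real.exp ((|a| + 2) * ‖z‖) := by
  classical
  set R : ℝ := |a| + 2 with hRdef
  have hR0 : (0:ℝ) < R := by positivity
  set s : Finset ℕ := Finset.range (N + 1) with hsdef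
  set v : ℕ → ℂ := fun ν => ((h ν : ℝ) : ℂ) with hvdef
  have habs1 : ∀ i ∈ s, |h i| ≤ 1 := fun i hi => abs_le.mpr ⟨(hmem i hi).1, (hmem i hi).2⟩
  have hinj : Set.InjOn v s := by
    intro i hi j hj hij
    by_contra hne
    exact hdist i hi j hj hne (Complex.ofReal_inj.mp hij)
  set f : ℂ → ℂ := fun ζ => Complex.exp (Complex.I * ζ * z) with hfdef
  have hfd : Differentiable ℂ f := by
    apply Differentiable.cexp
    exact (differentiable_const _).mul (differentiable_id) |>.mul (differentiable_const _)
  -- sphere facts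
  have hsphere : ∀ ζ ∈ sphere (0:ℂ) R, ‖ζ‖ = R := by
    intro ζ hζ
    simpa [mem_sphere_iff_norm] using hζ
  have hζv : ∀ ζ ∈ sphere (0:ℂ) R, ∀ i ∈ s, ζ ≠ v i := by
    intro ζ hζ i hi heq
    have h1 : ‖v i‖ ≤ 1 := by
      simpa [hvdef, Complex.norm_real, Real.norm_eq_abs] using habs1 i hi
    have h2 := hsphere _ hζ
    rw [heq] at h2
    rw [h2] at h1
    have := abs_nonneg a
    rw [hRdef] at h1
    linarith
  have hζa : ∀ ζ ∈ sphere (0:ℂ) R, ζ ≠ (a:ℂ) := by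
    intro ζ hζ heq
    have := hsphere _ hζ
    rw [heq] at this
    rw [Complex.norm_real, Real.norm_eq_abs] at this
    have : |a| + 2 ≤ |a| := by rw [← hRdef, this]
    linarith
  -- Cauchy integral formula
  have cauchy : ∀ w : ℂ, ‖w‖ < R →
      (∮ ζ in C(0, R), (ζ - w)⁻¹ * f ζ) = (2 * π * I) * f w := by
    intro w hw
    have := (hfd.differentiableOn (s := closedBall 0 R)).circleIntegral_sub_inv_smul
      (w := w) (by simpa [mem_ball, Complex.dist_eq] using hw)
    simpa [smul_eq_mul] using this
  -- integrability
  have hci : ∀ w : ℂ, ‖w‖ < R →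
      CircleIntegrable (fun ζ => (ζ - w)⁻¹ * f ζ) 0 R := by
    intro w hw
    apply ContinuousOn.circleIntegrable hR0.le
    apply ContinuousOn.mul
    · apply ContinuousOn.inv₀ (Continuous.continuousOn (by fun_prop))
      intro ζ hζ h0
      have : ζ = w := by
        have := sub_eq_zero.mp h0; exact this
      rw [this] at hζ
      rw [hsphere _ hζ] at hw
      exact lt_irrefl _ hw
    · exact hfd.continuous.continuousOn
  have hva : ∀ i ∈ s, ‖v i‖ < R := by
    intro i hi
    have h1 : ‖v i‖ ≤ 1 := by simpa [hvdef, Complex.norm_real, Real.norm_eq_abs] using habs1 i hi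
    have := abs_nonneg a
    rw [hRdef]
    linarith
  have haa : ‖(a:ℂ)‖ < R := by
    rw [Complex.norm_real, Real.norm_eq_abs]; rw [hRdef]; linarith
  -- the coefficients
  set c : ℕ → ℂ := fun ν => ∏ ν' ∈ s.erase ν, ((a - h ν') / (h ν - h ν') : ℂ) with hcdef
  -- integral identity
  set G : ℂ → ℂ := fun ζ => (ζ - (a:ℂ))⁻¹ * f ζ - ∑ ν ∈ s, c ν * ((ζ - v ν)⁻¹ * f ζ)
    with hGdef
  have hcontF : ∀ ν ∈ s, ContinuousOn (fun ζ => c ν * ((ζ - v ν)⁻¹ * f ζ)) (sphere (0:ℂ) R) := by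
    intro ν hν
    apply continuousOn_const.mul
    apply ContinuousOn.mul
    · apply ContinuousOn.inv₀ (Continuous.continuousOn (by fun_prop))
      intro ζ hζ h0
      exact (hζv ζ hζ ν hν) (sub_eq_zero.mp h0)
    · exact hfd.continuous.continuousOn
  have hciF : ∀ ν ∈ s, CircleIntegrable (fun ζ => c ν * ((ζ - v ν)⁻¹ * f ζ)) 0 R :=
    fun ν hν => ContinuousOn.circleIntegrable hR0.le (hcontF ν hν)
  have hint : (∮ ζ in C(0, R), G ζ)
      = (2 * π * I) * (f a - ∑ ν ∈ s, c ν * f (v ν)) := by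
    rw [hGdef]
    rw [circleIntegral.integral_sub (hci _ haa)
      (by
        apply ContinuousOn.circleIntegrable hR0.le
        exact continuousOn_finset_sum s hcontF)]
    rw [circleIntegral_finset_sum' s _ _ _ hciF]
    rw [cauchy _ haa]
    have : ∀ ν ∈ s, (∮ ζ in C(0, R), c ν * ((ζ - v ν)⁻¹ * f ζ))
        = c ν * ((2 * π * I) * f (v ν)) := by
      intro ν hν
      have := circleIntegral.integral_smul (𝕜 := ℂ) (c ν) (fun ζ => (ζ - v ν)⁻¹ * f ζ) 0 R
      simp only [smul_eq_mul] at this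
      rw [this, cauchy _ (hva ν hν)]
    rw [Finset.sum_congr rfl this]
    rw [mul_sub, Finset.mul_sum]
    congr 1
    exact Finset.sum_congr rfl fun ν _ => by ring
  -- pointwise bound
  set Cb : ℝ := Real.exp (R * ‖z‖) / 2 with hCbdef
  have hsne : s.Nonempty := ⟨0, by simp [hsdef]⟩
  have hGbound : ∀ ζ ∈ sphere (0:ℂ) R, ‖G ζ‖ ≤ Cb := by
    intro ζ hζ
    have hpf := partial_fraction hsne hinj ζ (a:ℂ) (hζv ζ hζ) (hζa ζ hζ)
    have hG : G ζ = ((ζ - (a:ℂ))⁻¹ - ∑ ν ∈ s, c ν * (ζ - v ν)⁻¹) * f ζ := by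
      simp only [hGdef, sub_mul, Finset.sum_mul]
      congr 1
      exact Finset.sum_congr rfl fun ν _ => by ring
    have hkernel : ((ζ - (a:ℂ))⁻¹ - ∑ ν ∈ s, c ν * (ζ - v ν)⁻¹)
        = (∏ i ∈ s, ((a:ℂ) - v i)) / ((∏ i ∈ s, (ζ - v i)) * (ζ - (a:ℂ))) := by
      rw [← hpf]
    set Pa : ℝ := ∏ i ∈ s, ‖(a:ℂ) - v i‖ with hPadef
    set Pζ : ℝ := ∏ i ∈ s, ‖ζ - v i‖ with hPzdef
    set D : ℝ := ‖ζ - (a:ℂ)‖ with hDdef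
    have hvle : ∀ i ∈ s, ‖v i‖ ≤ 1 := by
      intro i hi
      simpa [hvdef, Complex.norm_real, Real.norm_eq_abs] using habs1 i hi
    have hPa_le : ∀ i ∈ s, ‖(a:ℂ) - v i‖ ≤ |a| + 1 := by
      intro i hi
      calc ‖(a:ℂ) - v i‖ ≤ ‖(a:ℂ)‖ + ‖v i‖ := by
            simpa using norm_sub_le (a:ℂ) (v i)
        _ ≤ |a| + 1 := by
            rw [Complex.norm_real, Real.norm_eq_abs]
            linarith [hvle i hi]
    have hζv_ge : ∀ i ∈ s, |a| + 1 ≤ ‖ζ - v i‖ := by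
      intro i hi
      have h1 := norm_sub_norm_le ζ (v i)
      rw [hsphere _ hζ] at h1
      have := hvle i hi
      rw [hRdef] at h1
      linarith
    have hD2 : 2 ≤ D := by
      have h1 := norm_sub_norm_le ζ ((a:ℂ))
      rw [hsphere _ hζ, Complex.norm_real, Real.norm_eq_abs] at h1
      rw [hDdef]
      rw [hRdef] at h1
      linarith
    have hPζ_pos : 0 < Pζ := by
      apply Finset.prod_pos
      intro i hi
      have := hζv_ge i hi
      have h2 := abs_nonneg a
      linarith
    have hPaPζ : Pa ≤ Pζ :=
      Finset.prod_le_prod (fun i _ => norm_nonneg _)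
        (fun i hi => le_trans (hPa_le i hi) (hζv_ge i hi))
    have hPa_nonneg : 0 ≤ Pa := Finset.prod_nonneg fun i _ => norm_nonneg _
    have hker : Pa / (Pζ * D) ≤ 1 / 2 := by
      rw [div_le_div_iff₀ (mul_pos hPζ_pos (by linarith)) (by norm_num)]
      nlinarith
    have hE : ‖f ζ‖ ≤ Real.exp (R * ‖z‖) := by
      rw [hfdef]
      simp only
      rw [Complex.norm_exp]
      apply Real.exp_le_exp.mpr
      calc (I * ζ * z).re ≤ ‖I * ζ * z‖ := Complex.re_le_norm _
        _ = R * ‖z‖ := by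
            rw [norm_mul, norm_mul, Complex.norm_I, one_mul, hsphere _ hζ]
    calc ‖G ζ‖ = (Pa / (Pζ * D)) * ‖f ζ‖ := by
          rw [hG, hkernel, norm_mul, norm_div, norm_mul, norm_prod, norm_prod]
      _ ≤ (1/2) * Real.exp (R * ‖z‖) :=
          mul_le_mul hker hE (norm_nonneg _) (by norm_num)
      _ = Cb := by rw [hCbdef]; ring
  have hnorm := circleIntegral.norm_integral_le_of_norm_le_const (f := G) (c := 0) hR0.le hGbound
  rw [hint] at hnorm
  set Dq : ℂ := f ↑a - ∑ ν ∈ s, c ν * f (v ν) with hDqdef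
  have habsmul : ‖(2 * (π:ℂ) * I) * Dq‖ = 2 * π * ‖Dq‖ := by
    rw [norm_mul]
    congr 1
    simp [norm_mul, Complex.norm_I, Complex.norm_real, Real.norm_eq_abs,
      _root_.abs_of_nonneg Real.pi_pos.le]
  rw [habsmul] at hnorm
  have hDqle : ‖Dq‖ ≤ R * Cb := by
    have h2 : 2 * π * ‖Dq‖ ≤ 2 * π * (R * Cb) := by
      calc 2 * π * ‖Dq‖ ≤ 2 * π * R * Cb := hnorm
        _ = 2 * π * (R * Cb) := by ring
    exact le_of_mul_le_mul_left h2 (by positivity)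
  have hfin : ‖Dq‖ ≤ R / 2 * Real.exp (R * ‖z‖) := by
    calc ‖Dq‖ ≤ R * Cb := hDqle
      _ = R / 2 * Real.exp (R * ‖z‖) := by rw [hCbdef]; ring
  exact hfin


end HermiteAux

theorem hermite_remainder_bound (a : ℝ) (z : ℂ) (N : ℕ) (hN : 1 ≤ N) (h : ℕ → ℝ)
    (hmem : ∀ ν ∈ Finset.range (N + 1), h ν ∈ Set.Icc (-1 : ℝ) 1)
    (hdist : ∀ ν ∈ Finset.range (N + 1), ∀ ν' ∈ Finset.range (N + 1),
      ν ≠ ν' → h ν ≠ h ν') :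
    ‖(Complex.exp (Complex.I * a * z)
      - ∑ ν ∈ Finset.range (N + 1),
          ((∏ ν' ∈ (Finset.range (N + 1)).erase ν, ((a - h ν') / (h ν - h ν') : ℂ))
            * Complex.exp (Complex.I * (h ν) * z)))‖
      ≤ ((|a| + 2) / 2) * Real.exp ((|a| + 2) * ‖z‖)
          * ((|a| + 1) / (|a| + 1)) ^ (N + 1) ∧
    ‖(Complex.exp (Complex.I * a * z)
      - ∑ ν ∈ Finset.range (N + 1),
          ((∏ ν' ∈ (Finset.range (N + 1)).erase ν, ((a - h ν') / (h ν - h ν') : ℂ))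
            * Complex.exp (Complex.I * (h ν) * z)))‖
      ≤ ((|a| + 2) / 2) * Real.exp ((|a| + 2) * ‖z‖) := by
  have hmain := hermite_remainder_bound_aux a z N h hmem hdist
  have hone : ((|a| + 1) / (|a| + 1)) ^ (N + 1) = (1:ℝ) := by
    rw [div_self (by positivity : |a| + (1:ℝ) ≠ 0), one_pow]
  constructor
  · rw [hone, mul_one]; exact hmain
  · exact hmain
end

section
/- Let ε = (ε_N) be a sequence in [0,1) with ε_N → 0. Then for every λ ∈ ℝ and x ∈ ℝ, exp(iε_N x)·(cos(x(1−ε_N)/N) + iλ·sin(x(1−ε_N)/N))^N → exp(iλx) as N → ∞, uniformly on compact subsets of ℝ² in (λ,x). -/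
open Complex Filter

lemma aux_abs_sin_sub_le : ∀ x : ℝ, |x| ≤ 1 → |Real.sin x - x| ≤ x ^ 2 := by
  have key : ∀ x : ℝ, 0 ≤ x → x ≤ 1 → |Real.sin x - x| ≤ x ^ 2 := by
    intro x hx0 hx1
    rcases eq_or_lt_of_le hx0 with h | h
    · simp [← h]
    · have h1 : Real.sin x < x := Real.sin_lt h
      have h2 : x - x ^ 3 / 4 < Real.sin x := by have := Real.sin_gt_sub_cube h; nlinarith [pow_pos h 3]
      rw [abs_le]
      constructor <;> nlinarith
  intro x hx
  rcases le_or_gt 0 x with h | h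
  · exact key x h (le_of_abs_le hx)
  · have h' := key (-x) (by linarith) (by rw [abs_of_neg h] at hx; linarith)
    rw [Real.sin_neg] at h'
    calc |Real.sin x - x| = |-Real.sin x - -x| := by
          rw [← abs_neg]; congr 1; ring
    _ ≤ (-x) ^ 2 := h'
    _ = x ^ 2 := by ring

set_option maxHeartbeats 1600000 in
theorem superoscillation_tendsto (ε : ℕ → ℝ) (hε : ∀ N, ε N ∈ Set.Ico (0:ℝ) 1)
    (hlim : Tendsto ε atTop (nhds 0)) :
    ∀ K : Set (ℝ × ℝ), IsCompact K →
      TendstoUniformlyOn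
        (fun N (p : ℝ × ℝ) =>
          Complex.exp (Complex.I * (ε N : ℂ) * p.2)
            * (Complex.cos ((p.2 * (1 - ε N) / N : ℝ) : ℂ)
                + Complex.I * (p.1 : ℂ) * Complex.sin ((p.2 * (1 - ε N) / N : ℝ) : ℂ)) ^ N)
        (fun p => Complex.exp (Complex.I * (p.1 : ℂ) * p.2)) atTop K := by
  intro K hK
  rw [Metric.tendstoUniformlyOn_iff]
  intro δ hδ
  -- get a bound R ≥ 1 on K
  obtain ⟨R₀, hR₀⟩ := (Metric.isBounded_iff_subset_closedBall 0).1 hK.isBounded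
  set R : ℝ := max R₀ 1 with hRdef
  have hR1 : (1:ℝ) ≤ R := le_max_right _ _
  have hR0 : (0:ℝ) < R := lt_of_lt_of_le one_pos hR1
  have hbound : ∀ p ∈ K, |p.1| ≤ R ∧ |p.2| ≤ R := by
    intro p hp
    have h := hR₀ hp
    rw [Metric.mem_closedBall, dist_zero_right] at h
    have h1 : ‖p.1‖ ≤ ‖p‖ := norm_fst_le p
    have h2 : ‖p.2‖ ≤ ‖p‖ := norm_snd_le p
    rw [Real.norm_eq_abs] at h1 h2
    exact ⟨h1.trans (h.trans (le_max_left _ _)), h2.trans (h.trans (le_max_left _ _))⟩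
  set C : ℝ := 2 * R ^ 2 * (1 + R) ^ 2 with hCdef
  -- the error bound sequence tends to 0
  have hδN : Tendsto (fun N : ℕ => ε N * (R * (1 + R)) + C / N) atTop (nhds 0) := by
    have h1 := hlim.mul_const (R * (1 + R))
    have h2 := tendsto_const_div_atTop_nhds_zero_nat C
    simpa using h1.add h2
  have hev1 : ∀ᶠ N : ℕ in atTop, R * (R + 1) / N ≤ 1 / 2 :=
    (tendsto_const_div_atTop_nhds_zero_nat (R * (R + 1))).eventually_le_const one_half_pos
  have hev2 : ∀ᶠ N : ℕ in atTop, ε N * (R * (1 + R)) + C / N ≤ 1 / 2 :=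
    hδN.eventually_le_const one_half_pos
  have hev3 : ∀ᶠ N : ℕ in atTop, 2 * (ε N * (R * (1 + R)) + C / N) < δ :=
    (hδN.const_mul 2).eventually_lt_const (by simpa using hδ)
  filter_upwards [hev1, hev2, hev3, eventually_ge_atTop 1] with N h1 h2 h3 hN1 p hp
  -- pointwise estimate
  obtain ⟨hl, hx⟩ := hbound p hp
  set l : ℝ := p.1 with hldef
  set x : ℝ := p.2 with hxdef
  set e : ℝ := ε N with hedef
  have he0 : 0 ≤ e := (hε N).1
  have he1 : e < 1 := (hε N).2
  have hNpos : (0:ℝ) < N := by exact_mod_cast hN1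
  set w : ℝ := x * (1 - e) / N with hwdef
  have hwabs : |w| ≤ R / N := by
    rw [hwdef, abs_div, abs_mul, _root_.abs_of_pos hNpos,
      _root_.abs_of_nonneg (by linarith : (0:ℝ) ≤ 1 - e)]
    calc |x| * (1 - e) / N ≤ R * 1 / N := by gcongr <;> linarith
    _ = R / N := by ring
  have hRN : R / N ≤ 1 / 4 := by
    rw [div_le_iff₀ hNpos] at h1 ⊢
    nlinarith
  have hw1 : |w| ≤ 1 := hwabs.trans (by linarith)
  set u : ℂ := (Complex.cos (w:ℂ) - 1) + Complex.I * (l:ℂ) * Complex.sin (w:ℂ) with hudef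
  have hcos : |Real.cos w - 1| ≤ w ^ 2 / 2 :=
    abs_le.2 ⟨by nlinarith [Real.one_sub_sq_div_two_le_cos (x := w)],
      by nlinarith [Real.cos_le_one w]⟩
  have hsin : |Real.sin w| ≤ |w| := Real.abs_sin_le_abs
  have ecos : ‖Complex.cos (w:ℂ) - 1‖ = |Real.cos w - 1| := by
    rw [← Complex.ofReal_cos, ← Complex.ofReal_one, ← Complex.ofReal_sub, Complex.norm_real,
      Real.norm_eq_abs]
  have esin : ‖Complex.I * (l:ℂ) * Complex.sin (w:ℂ)‖ = |l| * |Real.sin w| := by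
    rw [← Complex.ofReal_sin, norm_mul, norm_mul, Complex.norm_I, one_mul,
      Complex.norm_real, Complex.norm_real, Real.norm_eq_abs, Real.norm_eq_abs]
  have hnormu : ‖u‖ ≤ |w| * (1 / 2 + |l|) := by
    calc ‖u‖ ≤ ‖Complex.cos (w:ℂ) - 1‖ + ‖Complex.I * (l:ℂ) * Complex.sin (w:ℂ)‖ :=
          norm_add_le _ _
    _ = |Real.cos w - 1| + |l| * |Real.sin w| := by rw [ecos, esin]
    _ ≤ w ^ 2 / 2 + |l| * |w| := by
          have := mul_le_mul_of_nonneg_left hsin (abs_nonneg l)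
          linarith
    _ ≤ |w| * (1 / 2 + |l|) := by
          have h1 : w ^ 2 = |w| ^ 2 := (_root_.sq_abs w).symm
          nlinarith [abs_nonneg w]
  have hu_half : ‖u‖ ≤ 1 / 2 := by
    have hstep : |w| * (1 / 2 + |l|) ≤ R / N * (R + 1) :=
      mul_le_mul hwabs (by linarith) (by positivity) (by positivity)
    have heq : R / N * (R + 1) = R * (R + 1) / N := by ring
    linarith [hnormu]
  have hzne : (1 : ℂ) + u ≠ 0 := by
    have hge : ‖(1:ℂ)‖ - ‖-u‖ ≤ ‖(1:ℂ) - -u‖ := norm_sub_norm_le _ _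
    rw [norm_neg, norm_one, sub_neg_eq_add] at hge
    have hpos : (0:ℝ) < ‖(1:ℂ) + u‖ := by linarith
    exact norm_pos_iff.1 hpos
  have hlog1 : ‖Complex.log (1 + u) - u‖ ≤ ‖u‖ ^ 2 := by
    have h := Complex.norm_log_one_add_sub_self_le (z := u) (by linarith : ‖u‖ < 1)
    have hinv : (1 - ‖u‖)⁻¹ ≤ 2 := by
      rw [show (2:ℝ) = (1/2 : ℝ)⁻¹ by norm_num]
      exact inv_anti₀ (by norm_num) (by linarith)
    calc ‖Complex.log (1 + u) - u‖ ≤ ‖u‖ ^ 2 * (1 - ‖u‖)⁻¹ / 2 := h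
    _ ≤ ‖u‖ ^ 2 * 2 / 2 := by
          have := sq_nonneg ‖u‖
          nlinarith
    _ = ‖u‖ ^ 2 := by ring
  have hsinw : ‖Complex.sin (w:ℂ) - (w:ℂ)‖ = |Real.sin w - w| := by
    rw [← Complex.ofReal_sin, ← Complex.ofReal_sub, Complex.norm_real, Real.norm_eq_abs]
  have hkey : ‖Complex.log (1 + u) - Complex.I * (l:ℂ) * (w:ℂ)‖ ≤ 2 * (1 + R) ^ 2 * w ^ 2 := by
    have hdecomp : Complex.log (1 + u) - Complex.I * (l:ℂ) * (w:ℂ) =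
        (Complex.log (1 + u) - u) + ((Complex.cos (w:ℂ) - 1)
          + Complex.I * (l:ℂ) * (Complex.sin (w:ℂ) - (w:ℂ))) := by
      rw [hudef]; ring
    have t0 : ‖Complex.I * (l:ℂ) * (Complex.sin (w:ℂ) - (w:ℂ))‖ = |l| * |Real.sin w - w| := by
      rw [norm_mul, norm_mul, Complex.norm_I, one_mul, Complex.norm_real, Real.norm_eq_abs,
        hsinw]
    have t1 : ‖Complex.log (1 + u) - Complex.I * (l:ℂ) * (w:ℂ)‖ ≤
        ‖u‖ ^ 2 + (w ^ 2 / 2 + |l| * |Real.sin w - w|) := by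
      rw [hdecomp]
      calc ‖(Complex.log (1 + u) - u) + ((Complex.cos (w:ℂ) - 1)
              + Complex.I * (l:ℂ) * (Complex.sin (w:ℂ) - (w:ℂ)))‖
          ≤ ‖Complex.log (1 + u) - u‖ + (‖Complex.cos (w:ℂ) - 1‖
              + ‖Complex.I * (l:ℂ) * (Complex.sin (w:ℂ) - (w:ℂ))‖) :=
            (norm_add_le _ _).trans (by gcongr; exact norm_add_le _ _)
      _ ≤ ‖u‖ ^ 2 + (w ^ 2 / 2 + |l| * |Real.sin w - w|) := by
            rw [ecos, t0]; gcongr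
    have t2 : ‖u‖ ^ 2 ≤ w ^ 2 * (1 / 2 + |l|) ^ 2 := by
      calc ‖u‖ ^ 2 ≤ (|w| * (1 / 2 + |l|)) ^ 2 := by
            apply pow_le_pow_left₀ (norm_nonneg u) hnormu
      _ = w ^ 2 * (1 / 2 + |l|) ^ 2 := by rw [mul_pow, _root_.sq_abs]
    have t3 : |Real.sin w - w| ≤ w ^ 2 := aux_abs_sin_sub_le w hw1
    have t4 : |l| * |Real.sin w - w| ≤ |l| * w ^ 2 :=
      mul_le_mul_of_nonneg_left t3 (abs_nonneg l)
    have hl2 : |l| ^ 2 ≤ R ^ 2 := by nlinarith [abs_nonneg l]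
    have hcoef : (1 / 2 + |l|) ^ 2 + (1 / 2 + |l|) ≤ 2 * (1 + R) ^ 2 := by
      nlinarith [abs_nonneg l]
    nlinarith [sq_nonneg w, t1, t2, t4]
  set E : ℂ := Complex.I * (e:ℂ) * (x:ℂ) + (N:ℂ) * Complex.log (1 + u)
      - Complex.I * (l:ℂ) * (x:ℂ) with hEdef
  have hNne : (N:ℂ) ≠ 0 := Nat.cast_ne_zero.2 (by omega)
  have hNw : (N:ℂ) * (w:ℂ) = (x:ℂ) * (1 - (e:ℂ)) := by
    rw [hwdef]; push_cast; field_simp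
  have hEeq : E = Complex.I * (e:ℂ) * (x:ℂ) * (1 - (l:ℂ))
      + (N:ℂ) * (Complex.log (1 + u) - Complex.I * (l:ℂ) * (w:ℂ)) := by
    rw [hEdef]
    linear_combination Complex.I * (l:ℂ) * hNw
  have hnormE : ‖E‖ ≤ e * (R * (1 + R)) + C / N := by
    rw [hEeq]
    have n1 : ‖Complex.I * (e:ℂ) * (x:ℂ) * (1 - (l:ℂ))‖ ≤ e * (R * (1 + R)) := by
      have h1l : (1:ℂ) - (l:ℂ) = ((1 - l : ℝ) : ℂ) := by push_cast; ring
      rw [h1l, norm_mul, norm_mul, norm_mul, Complex.norm_I, one_mul, Complex.norm_real,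
        Complex.norm_real, Complex.norm_real, Real.norm_eq_abs, Real.norm_eq_abs,
        Real.norm_eq_abs, _root_.abs_of_nonneg he0]
      have hlR := abs_le.1 hl
      have h1lR : |1 - l| ≤ 1 + R := abs_le.2 ⟨by linarith [hlR.2], by linarith [hlR.1]⟩
      calc e * |x| * |1 - l| ≤ e * R * (1 + R) := by gcongr
      _ = e * (R * (1 + R)) := by ring
    have hw2 : w ^ 2 ≤ (R / N) ^ 2 := by
      rw [← _root_.sq_abs]
      exact pow_le_pow_left₀ (abs_nonneg w) hwabs 2
    have n2 : ‖(N:ℂ) * (Complex.log (1 + u) - Complex.I * (l:ℂ) * (w:ℂ))‖ ≤ C / N := by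
      rw [norm_mul, Complex.norm_natCast]
      calc (N:ℝ) * ‖Complex.log (1 + u) - Complex.I * (l:ℂ) * (w:ℂ)‖
          ≤ (N:ℝ) * (2 * (1 + R) ^ 2 * (R / N) ^ 2) := by
            apply mul_le_mul_of_nonneg_left _ (le_of_lt hNpos)
            calc ‖Complex.log (1 + u) - Complex.I * (l:ℂ) * (w:ℂ)‖
                ≤ 2 * (1 + R) ^ 2 * w ^ 2 := hkey
            _ ≤ 2 * (1 + R) ^ 2 * (R / N) ^ 2 := by nlinarith
      _ = C / N := by rw [hCdef]; field_simp
    calc ‖Complex.I * (e:ℂ) * (x:ℂ) * (1 - (l:ℂ))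
          + (N:ℂ) * (Complex.log (1 + u) - Complex.I * (l:ℂ) * (w:ℂ))‖
        ≤ ‖Complex.I * (e:ℂ) * (x:ℂ) * (1 - (l:ℂ))‖
          + ‖(N:ℂ) * (Complex.log (1 + u) - Complex.I * (l:ℂ) * (w:ℂ))‖ := norm_add_le _ _
    _ ≤ e * (R * (1 + R)) + C / N := add_le_add n1 n2
  have hz' : Complex.cos (w:ℂ) + Complex.I * (l:ℂ) * Complex.sin (w:ℂ) = 1 + u := by
    rw [hudef]; ring
  have main : Complex.exp (Complex.I * (e:ℂ) * (x:ℂ))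
      * (Complex.cos (w:ℂ) + Complex.I * (l:ℂ) * Complex.sin (w:ℂ)) ^ N
      = Complex.exp (Complex.I * (l:ℂ) * (x:ℂ)) * Complex.exp E := by
    rw [hz', ← Complex.exp_log hzne, ← Complex.exp_nat_mul, ← Complex.exp_add,
      ← Complex.exp_add]
    congr 1
    rw [hEdef]; ring
  rw [dist_eq_norm]
  have habs1 : ‖Complex.exp (Complex.I * (l:ℂ) * (x:ℂ))‖ = 1 := by
    rw [show Complex.I * (l:ℂ) * (x:ℂ) = ((l * x : ℝ) : ℂ) * Complex.I from by push_cast; ring,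
      Complex.norm_exp_ofReal_mul_I]
  have hexpE : ‖Complex.exp E - 1‖ ≤ 2 * ‖E‖ := by
    have hE1 : ‖E‖ ≤ 1 := by
      linarith
    simpa using Complex.norm_exp_sub_one_le hE1
  calc ‖Complex.exp (Complex.I * (l:ℂ) * (x:ℂ)) - Complex.exp (Complex.I * (e:ℂ) * (x:ℂ))
        * (Complex.cos (w:ℂ) + Complex.I * (l:ℂ) * Complex.sin (w:ℂ)) ^ N‖
      = ‖Complex.exp (Complex.I * (l:ℂ) * (x:ℂ)) * (1 - Complex.exp E)‖ := by
        rw [main]; congr 1; ring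
  _ = ‖Complex.exp E - 1‖ := by rw [norm_mul, habs1, one_mul, norm_sub_rev]
  _ ≤ 2 * ‖E‖ := hexpE
  _ ≤ 2 * (e * (R * (1 + R)) + C / N) := by linarith
  _ < δ := h3
end

section
/- Let T(X) = Σ_{κ=0}^N a_κ X^κ be a polynomial of degree at most N with complex coefficients, R > 0, and let γ_ν = ∫_0^1 T(Rξ)·ℓ_ν(ξ) dξ for 0 ≤ ν ≤ N, where ℓ_ν are the shifted Legendre polynomials. Then for every 0 ≤ κ ≤ N: a_κ·R^κ = (−1)^κ·C(2κ,κ)·Σ_{ν=κ}^N √(2ν+1)·C(ν+κ, ν−κ)·γ_ν. -/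
open Finset intervalIntegral

-- Lemma 1: alternating partial sums of binomials
lemma alt_sum_choose (b : ℕ) : ∀ k : ℕ,
    ∑ j ∈ range (k+1), (-1:ℝ)^j * ((b+1).choose j) = (-1)^k * (b.choose k) := by
  intro k
  induction k with
  | zero => simp
  | succ k ih =>
    rw [Finset.sum_range_succ, ih, Nat.choose_succ_succ' b k]
    push_cast
    ring

-- common recurrence step
lemma step_sum (a B k : ℕ) :
    (∑ i ∈ range (k+2), (-1:ℝ)^i * ((a+1+i).choose i) * (B.choose (k+1-i)))
    + ∑ i ∈ range (k+1), (-1:ℝ)^i * ((a+1+i).choose i) * (B.choose (k-i))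
    = ∑ i ∈ range (k+2), (-1:ℝ)^i * ((a+i).choose i) * (B.choose (k+1-i)) := by
  rw [Finset.sum_range_succ' (fun i => (-1:ℝ)^i * ((a+1+i).choose i) * (B.choose (k+1-i))) (k+1),
      Finset.sum_range_succ' (fun i => (-1:ℝ)^i * ((a+i).choose i) * (B.choose (k+1-i))) (k+1)]
  have h0 : ((-1:ℝ)^0 * ((a+1+0).choose 0) * (B.choose (k+1-0)))
      = (-1:ℝ)^0 * ((a+0).choose 0) * (B.choose (k+1-0)) := by simp
  rw [add_right_comm, h0, add_left_inj, ← Finset.sum_add_distrib]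
  apply Finset.sum_congr rfl
  intro i _
  have hc : (a+1+(i+1)).choose (i+1) = (a+(i+1)).choose (i+1) + (a+1+i).choose i := by
    have : a+1+(i+1) = (a+1+i)+1 := by ring
    rw [this, Nat.choose_succ_succ' (a+1+i) i]
    have : a+(i+1) = a+1+i := by ring
    rw [this, Nat.add_comm ((a+1+i).choose i)]
  have hs : k+1-(i+1) = k-i := by omega
  rw [hc, hs]
  push_cast
  ring

-- Lemma 2: negated Vandermonde
lemma lem2 (a : ℕ) : ∀ j k : ℕ,
    ∑ i ∈ range (k+1), (-1:ℝ)^i * ((a+i).choose i) * ((a+1+j).choose (k-i))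
      = (j.choose k : ℝ) := by
  induction a with
  | zero =>
    intro j k
    have hre := Finset.sum_range_reflect
      (fun i => (-1:ℝ)^i * ((0+i).choose i) * ((0+1+j).choose (k-i))) (k+1)
    rw [← hre]
    have : ∀ i ∈ range (k+1),
        (-1:ℝ)^(k+1-1-i) * (((0+(k+1-1-i)).choose (k+1-1-i)) : ℝ) * (((0+1+j).choose (k-(k+1-1-i))) : ℝ)
        = (-1:ℝ)^k * ((-1:ℝ)^i * ((j+1).choose i)) := by
      intro i hi
      rw [Finset.mem_range] at hi
      have h1 : k+1-1-i = k-i := by omega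
      have h2 : k-(k-i) = i := by omega
      rw [h1, h2]
      simp only [Nat.zero_add, Nat.choose_self, Nat.cast_one]
      have h3 : (-1:ℝ)^(k-i) * (-1:ℝ)^i = (-1:ℝ)^k := by
        rw [← pow_add]; congr 1; omega
      have : 1+j = j+1 := by ring
      rw [this]
      calc (-1:ℝ)^(k-i) * 1 * ((j+1).choose i)
          = ((-1:ℝ)^(k-i) * (-1)^i) * ((-1:ℝ)^i * ((j+1).choose i)) := by
            rw [← mul_assoc]
            have : ((-1:ℝ)^(k-i) * (-1)^i) * (-1:ℝ)^i = (-1:ℝ)^(k-i) * ((-1)^i*(-1:ℝ)^i) := by ring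
            rw [this]
            simp [← pow_add]
        _ = (-1:ℝ)^k * ((-1:ℝ)^i * ((j+1).choose i)) := by rw [h3]
    rw [Finset.sum_congr rfl this, ← Finset.mul_sum]
    have := alt_sum_choose j k
    rw [this]
    calc (-1:ℝ)^k * ((-1:ℝ)^k * (j.choose k)) = ((-1:ℝ)^k)^2 * (j.choose k) := by ring
      _ = (j.choose k : ℝ) := by rw [← pow_mul, pow_mul']; simp
  | succ a ih =>
    intro j k
    induction k with
    | zero => simp
    | succ k ihk =>
      have hstep := step_sum a (a+2+j) k
      have e1 : a+1+1+j = a+2+j := by ring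
      have e2 : a+1+(j+1) = a+2+j := by ring
      have h1 : ∑ i ∈ range (k+2), (-1:ℝ)^i * ((a+i).choose i) * ((a+2+j).choose (k+1-i))
          = ((j+1).choose (k+1) : ℝ) := by
        have := ih (j+1) (k+1); rw [e2] at this; exact this
      have h2 : ∑ i ∈ range (k+1), (-1:ℝ)^i * ((a+1+i).choose i) * ((a+2+j).choose (k-i))
          = (j.choose k : ℝ) := by
        rw [← e1]; exact ihk
      have key : ∑ i ∈ range (k+2), (-1:ℝ)^i * ((a+1+i).choose i) * ((a+2+j).choose (k+1-i))
          = (j.choose (k+1) : ℝ) := by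
        have := hstep
        rw [h2] at this
        have h3 : ∑ i ∈ range (k+2), (-1:ℝ)^i * ((a+1+i).choose i) * ((a+2+j).choose (k+1-i))
            = ((j+1).choose (k+1) : ℝ) - (j.choose k : ℝ) := by
          rw [← h1]; linarith
        rw [h3, Nat.choose_succ_succ' j k]
        push_cast; ring
      exact key

-- diag : L(b,b,k) = (-1)^k
lemma diag (b k : ℕ) :
    ∑ i ∈ range (k+1), (-1:ℝ)^i * ((b+i).choose i) * (b.choose (k-i)) = (-1)^k := by
  cases b with
  | zero =>
    rw [Finset.sum_eq_single k]
    · simp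
    · intro i hi hne
      rw [Finset.mem_range] at hi
      have : k - i ≠ 0 := by omega
      simp [Nat.choose_eq_zero_iff.2 (by omega : 0 < k - i)]
    · intro h; exact absurd (Finset.self_mem_range_succ k) h
  | succ b =>
    induction k with
    | zero => simp
    | succ k ihk =>
      have hstep := step_sum b (b+1) k
      have h1 : ∑ i ∈ range (k+2), (-1:ℝ)^i * ((b+i).choose i) * ((b+1).choose (k+1-i))
          = ((0:ℕ).choose (k+1) : ℝ) := by
        have := lem2 b 0 (k+1)
        simpa using this
      have key : ∑ i ∈ range (k+2), (-1:ℝ)^i * ((b+1+i).choose i) * ((b+1).choose (k+1-i))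
          = (-1:ℝ)^(k+1) := by
        have := hstep
        rw [ihk, h1] at this
        have : ∑ i ∈ range (k+2), (-1:ℝ)^i * ((b+1+i).choose i) * ((b+1).choose (k+1-i))
            = ((0:ℕ).choose (k+1) : ℝ) - (-1:ℝ)^k := by linarith
        rw [this]
        simp [pow_succ]
      exact key

-- Lemma 4 : alternating sum
lemma alt_legendre (ν : ℕ) :
    ∑ j ∈ range (ν+1), (-1:ℝ)^j * (ν.choose j) * ((ν+j).choose j) = (-1)^ν := by
  rw [← diag ν ν]
  apply Finset.sum_congr rfl
  intro j hj
  rw [Finset.mem_range] at hj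
  have h : ν.choose (ν - j) = ν.choose j := Nat.choose_symm (by omega)
  rw [← h]
  ring

-- helper for lem3 split
lemma split_helper (c i : ℕ) :
    (c+2*(i+1)+1) * ((c+i+1).choose (i+1))
      = (c+1) * ((c+i+2).choose (i+1)) + (c+1) * ((c+i+1).choose i) := by
  have h1 : (c+i+1).choose (i+1) * (c+i+1+1) = (c+i+1+1).choose (i+1) * (c+i+1+1-(i+1)) :=
    Nat.choose_mul_succ_eq (c+i+1) (i+1)
  have h1' : (c+i+2) * ((c+i+1).choose (i+1)) = (c+1) * ((c+i+2).choose (i+1)) := by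
    have e : c+i+1+1-(i+1) = c+1 := by omega
    rw [e] at h1
    have e2 : c+i+1+1 = c+i+2 := by omega
    rw [e2] at h1
    calc (c+i+2) * ((c+i+1).choose (i+1)) = (c+i+1).choose (i+1) * (c+i+2) := Nat.mul_comm _ _
      _ = (c+i+2).choose (i+1) * (c+1) := h1
      _ = (c+1) * ((c+i+2).choose (i+1)) := Nat.mul_comm _ _
  have h2 : (c+i).choose i * (c+i+1) = (c+i+1).choose i * (c+i+1-i) :=
    Nat.choose_mul_succ_eq (c+i) i
  have h2' : (i+1) * ((c+i+1).choose (i+1)) = (c+1) * ((c+i+1).choose i) := by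
    have h3 : (c+i+1) * ((c+i).choose i) = (c+i+1).choose (i+1) * (i+1) :=
      Nat.add_one_mul_choose_eq (c+i) i
    have e : c+i+1-i = c+1 := by omega
    rw [e] at h2
    calc (i+1) * ((c+i+1).choose (i+1)) = (c+i+1).choose (i+1) * (i+1) := Nat.mul_comm _ _
      _ = (c+i+1) * ((c+i).choose i) := h3.symm
      _ = (c+i).choose i * (c+i+1) := Nat.mul_comm _ _
      _ = (c+i+1).choose i * (c+1) := h2
      _ = (c+1) * ((c+i+1).choose i) := Nat.mul_comm _ _
  have : c+2*(i+1)+1 = (c+i+2) + (i+1) := by omega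
  rw [this, Nat.add_mul, h1', h2']

-- Lemma 3
lemma lem3 (c d : ℕ) (hd : 1 ≤ d) :
    ∑ i ∈ range (d+1), (-1:ℝ)^i * (c+2*i+1) * ((c+i).choose i) * ((c+2*d+1).choose (d-i)) = 0 := by
  obtain ⟨e, rfl⟩ : ∃ e, d = e + 1 := ⟨d - 1, by omega⟩
  -- S1 : with a = c+1, j = 2d-1 = 2e+1, k = d = e+1
  have hS1 : ∑ i ∈ range (e+2), (-1:ℝ)^i * ((c+1+i).choose i) * ((c+2*(e+1)+1).choose (e+1-i))
      = ((2*e+1).choose (e+1) : ℝ) := by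
    have := lem2 (c+1) (2*e+1) (e+1)
    have e1 : c+1+1+(2*e+1) = c+2*(e+1)+1 := by ring
    rw [e1] at this
    exact this
  have hS2 : ∑ i ∈ range (e+1), (-1:ℝ)^i * ((c+1+i).choose i) * ((c+2*(e+1)+1).choose (e-i))
      = ((2*e+1).choose e : ℝ) := by
    have := lem2 (c+1) (2*e+1) e
    have e1 : c+1+1+(2*e+1) = c+2*(e+1)+1 := by ring
    rw [e1] at this
    exact this
  -- split the main sum
  have hmain : ∑ i ∈ range (e+2), (-1:ℝ)^i * (c+2*i+1) * ((c+i).choose i) * ((c+2*(e+1)+1).choose (e+1-i))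
      = (c+1) * (∑ i ∈ range (e+2), (-1:ℝ)^i * ((c+1+i).choose i) * ((c+2*(e+1)+1).choose (e+1-i)))
        - (c+1) * (∑ i ∈ range (e+1), (-1:ℝ)^i * ((c+1+i).choose i) * ((c+2*(e+1)+1).choose (e-i))) := by
    rw [Finset.sum_range_succ' (fun i => (-1:ℝ)^i * (c+2*i+1) * ((c+i).choose i) * ((c+2*(e+1)+1).choose (e+1-i))) (e+1),
        Finset.sum_range_succ' (fun i => (-1:ℝ)^i * ((c+1+i).choose i) * ((c+2*(e+1)+1).choose (e+1-i))) (e+1)]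
    have hterm : ∑ i ∈ range (e+1), (-1:ℝ)^(i+1) * ((c:ℝ)+2*((i+1:ℕ):ℝ)+1) * (((c+(i+1)).choose (i+1) : ℕ):ℝ) * (((c+2*(e+1)+1).choose (e+1-(i+1)) : ℕ):ℝ)
        = ((c:ℝ)+1) * (∑ i ∈ range (e+1), (-1:ℝ)^(i+1) * (((c+1+(i+1)).choose (i+1) : ℕ):ℝ) * (((c+2*(e+1)+1).choose (e+1-(i+1)) : ℕ):ℝ))
          - ((c:ℝ)+1) * (∑ i ∈ range (e+1), (-1:ℝ)^i * (((c+1+i).choose i : ℕ):ℝ) * (((c+2*(e+1)+1).choose (e-i) : ℕ):ℝ)) := by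
      rw [Finset.mul_sum, Finset.mul_sum, ← Finset.sum_sub_distrib]
      apply Finset.sum_congr rfl
      intro i hi
      have hs : e+1-(i+1) = e-i := by omega
      rw [hs]
      have hsplit := split_helper c i
      have hcast : ((c:ℝ)+2*((i:ℝ)+1)+1) * ((c+i+1).choose (i+1))
          = ((c:ℝ)+1) * ((c+i+2).choose (i+1)) + ((c:ℝ)+1) * ((c+i+1).choose i) := by
        have := congrArg (Nat.cast : ℕ → ℝ) hsplit
        push_cast at this
        convert this using 2 <;> push_cast <;> ring
      have e1 : c+(i+1) = c+i+1 := by ring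
      have e2 : c+1+(i+1) = c+i+2 := by ring
      have e3 : c+1+i = c+i+1 := by ring
      rw [e1, e2, e3]
      calc ((-1:ℝ))^(i+1) * ((c:ℝ)+2*((i+1:ℕ):ℝ)+1) * (((c+i+1).choose (i+1) : ℕ):ℝ) * (((c+2*(e+1)+1).choose (e-i) : ℕ):ℝ)
          = (-1:ℝ)^(i+1) * (((c:ℝ)+2*((i:ℝ)+1)+1) * ((c+i+1).choose (i+1))) * ((c+2*(e+1)+1).choose (e-i)) := by
            push_cast; ring
        _ = (-1:ℝ)^(i+1) * (((c:ℝ)+1) * ((c+i+2).choose (i+1)) + ((c:ℝ)+1) * ((c+i+1).choose i)) * ((c+2*(e+1)+1).choose (e-i)) := by rw [hcast]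
        _ = _ := by push_cast; ring
    rw [hterm]
    have h0 : (-1:ℝ)^(0:ℕ) * ((c:ℝ)+2*((0:ℕ):ℝ)+1) * (((c+0).choose 0 : ℕ):ℝ) * (((c+2*(e+1)+1).choose (e+1-0) : ℕ):ℝ)
        = ((c:ℝ)+1) * ((-1:ℝ)^(0:ℕ) * (((c+1+0).choose 0 : ℕ):ℝ) * (((c+2*(e+1)+1).choose (e+1-0) : ℕ):ℝ)) := by
      simp
    rw [h0]
    ring
  rw [hmain, hS1, hS2]
  have : (2*e+1).choose (e+1) = (2*e+1).choose e := by
    apply Nat.choose_symm_of_eq_add; omega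
  rw [this]
  ring

-- Lemma 5: closed form
lemma lem5 (m : ℕ) : ∀ ν : ℕ,
    ∑ j ∈ range (ν+1), (-1:ℝ)^j * (ν.choose j) * ((ν+j).choose j) / (m+j+1)
      = (-1:ℝ)^ν * (m.choose ν) / ((m+ν+1) * ((m+ν).choose ν)) := by
  intro ν
  induction ν with
  | zero => simp
  | succ ν ih =>
    have hden : ∀ j : ℕ, ((m:ℝ)+j+1) ≠ 0 := by
      intro j; positivity
    -- step equation for the sum side
    have hE : ((m:ℝ)+ν+2) * (∑ j ∈ range (ν+2), (-1:ℝ)^j * ((ν+1).choose j) * ((ν+1+j).choose j) / (m+j+1))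
        = (-1:ℝ)^(ν+1) + ∑ j ∈ range (ν+2), (-1:ℝ)^j * ((ν+1).choose j) * ((ν+1+j).choose j) * (((ν:ℝ)+1-j)) / (m+j+1) := by
      rw [Finset.mul_sum]
      rw [← alt_legendre (ν+1), ← Finset.sum_add_distrib]
      apply Finset.sum_congr rfl
      intro j hj
      have h : ((m:ℝ)+ν+2) = ((m:ℝ)+j+1) + ((ν:ℝ)+1-j) := by ring
      field_simp
      ring
    have hE2 : ((m:ℝ)-ν) * (∑ j ∈ range (ν+1), (-1:ℝ)^j * (ν.choose j) * ((ν+j).choose j) / (m+j+1))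
        = (-1:ℝ)^ν - ∑ j ∈ range (ν+1), (-1:ℝ)^j * (ν.choose j) * ((ν+j).choose j) * (((ν:ℝ)+j+1)) / (m+j+1) := by
      rw [Finset.mul_sum]
      rw [← alt_legendre ν, ← Finset.sum_sub_distrib]
      apply Finset.sum_congr rfl
      intro j hj
      field_simp
      ring
    -- the two pole sums are equal
    have hP : ∑ j ∈ range (ν+2), (-1:ℝ)^j * ((ν+1).choose j) * ((ν+1+j).choose j) * (((ν:ℝ)+1-j)) / (m+j+1)
        = ∑ j ∈ range (ν+1), (-1:ℝ)^j * (ν.choose j) * ((ν+j).choose j) * (((ν:ℝ)+j+1)) / (m+j+1) := by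
      rw [Finset.sum_range_succ]
      have hlast : (-1:ℝ)^(ν+1) * (((ν+1).choose (ν+1) : ℕ):ℝ) * (((ν+1+(ν+1)).choose (ν+1) : ℕ):ℝ) * ((ν:ℝ)+1-((ν+1:ℕ):ℝ)) / ((m:ℝ)+((ν+1:ℕ):ℝ)+1) = 0 := by
        push_cast
        ring_nf
      rw [hlast, add_zero]
      apply Finset.sum_congr rfl
      intro j hj
      rw [Finset.mem_range] at hj
      have hj' : j ≤ ν := by omega
      -- ℕ identity: (ν+1-j)*C(ν+1,j)*C(ν+1+j,j) = (ν+j+1)*C(ν,j)*C(ν+j,j)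
      have k1 : (ν+1).choose j * (ν+1-j) = ν.choose j * (ν+1) := by
        have := Nat.choose_mul_succ_eq ν j
        omega
      have k2 : (ν+j).choose j * (ν+j+1) = (ν+j+1).choose j * (ν+1) := by
        have := Nat.choose_mul_succ_eq (ν+j) j
        have e : ν+j+1-j = ν+1 := by omega
        rw [e] at this
        exact this
      have k3 : (ν+1).choose j * (ν+1-j) * ((ν+1+j).choose j) = ν.choose j * ((ν+j).choose j) * (ν+j+1) := by
        rw [k1]
        have e : ν+1+j = ν+j+1 := by ring
        rw [e]
        calc ν.choose j * (ν+1) * ((ν+j+1).choose j) = ν.choose j * ((ν+j+1).choose j * (ν+1)) := by ring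
          _ = ν.choose j * ((ν+j).choose j * (ν+j+1)) := by rw [k2]
          _ = ν.choose j * ((ν+j).choose j) * (ν+j+1) := by ring
      have k3' : ((ν:ℝ)+1-j) * ((ν+1).choose j) * ((ν+1+j).choose j) = (ν.choose j) * ((ν+j).choose j) * ((ν:ℝ)+j+1) := by
        have := congrArg (Nat.cast : ℕ → ℝ) k3
        push_cast [Nat.cast_sub (by omega : j ≤ ν+1)] at this
        push_cast
        linarith [this]
      calc (-1:ℝ)^j * ((ν+1).choose j) * ((ν+1+j).choose j) * (((ν:ℝ)+1-j)) / (m+j+1)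
          = (-1:ℝ)^j * ((((ν:ℝ)+1-j)) * ((ν+1).choose j) * ((ν+1+j).choose j)) / (m+j+1) := by ring
        _ = (-1:ℝ)^j * ((ν.choose j) * ((ν+j).choose j) * ((ν:ℝ)+j+1)) / (m+j+1) := by rw [k3']
        _ = _ := by ring
    -- combine: F_{ν+1} = -(m-ν) F_ν / (m+ν+2)
    have hsolve : ∑ j ∈ range (ν+2), (-1:ℝ)^j * ((ν+1).choose j) * ((ν+1+j).choose j) / (m+j+1)
        = -(((m:ℝ)-ν) * (∑ j ∈ range (ν+1), (-1:ℝ)^j * (ν.choose j) * ((ν+j).choose j) / (m+j+1))) / ((m:ℝ)+ν+2) := by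
      have hne : ((m:ℝ)+ν+2) ≠ 0 := by positivity
      rw [eq_div_iff hne]
      have := hE
      rw [hP] at this
      have h2 := hE2
      have hpow : (-1:ℝ)^(ν+1) = -((-1:ℝ)^ν) := by rw [pow_succ]; ring
      nlinarith [this, h2]
    rw [hsolve, ih]
    -- now the closed-form recurrence
    have hc1 : ((m+ν+1:ℕ):ℝ) * ((m+ν).choose ν) ≠ 0 := by
      have : 0 < (m+ν).choose ν := Nat.choose_pos (by omega)
      positivity
    have hch2 : (0:ℝ) < ((m+ν).choose ν : ℝ) := by
      exact_mod_cast Nat.choose_pos (by omega : ν ≤ m+ν)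
    have hch3 : (0:ℝ) < ((m+ν+1).choose (ν+1) : ℝ) := by
      exact_mod_cast Nat.choose_pos (by omega : ν+1 ≤ m+ν+1)
    -- key ℕ facts
    have f1 : (m+ν+1) * ((m+ν).choose ν) = (m+ν+1).choose (ν+1) * (ν+1) :=
      Nat.add_one_mul_choose_eq (m+ν) ν
    have f2 : m.choose (ν+1) * (ν+1) = m.choose ν * (m-ν) := Nat.choose_succ_right_eq m ν
    have goal' : ((-1:ℝ)^(ν+1) * (m.choose (ν+1))) * (((m:ℝ)+ν+1) * ((m+ν).choose ν)) * ((m:ℝ)+ν+2)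
        = (-(((m:ℝ)-ν) * ((-1:ℝ)^ν * (m.choose ν)))) * (((m:ℝ)+ν+1+1) * ((m+ν+1).choose (ν+1))) := by
      have f1' : ((m:ℝ)+ν+1) * ((m+ν).choose ν) = ((m+ν+1).choose (ν+1)) * ((ν:ℝ)+1) := by
        have := congrArg (Nat.cast : ℕ → ℝ) f1
        push_cast at this
        linarith
      rcases le_or_gt ν m with hle | hlt
      · have f2' : ((m.choose (ν+1)):ℝ) * ((ν:ℝ)+1) = (m.choose ν) * ((m:ℝ)-ν) := by
          have := congrArg (Nat.cast : ℕ → ℝ) f2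
          push_cast [Nat.cast_sub hle] at this
          linarith
        have expand : ((-1:ℝ)^(ν+1) * (m.choose (ν+1))) * (((m:ℝ)+ν+1) * ((m+ν).choose ν)) * ((m:ℝ)+ν+2)
            = (-1:ℝ)^(ν+1) * (((m.choose (ν+1)):ℝ) * ((ν:ℝ)+1)) * ((m+ν+1).choose (ν+1)) * ((m:ℝ)+ν+2) := by
          rw [f1']; ring
        rw [expand, f2']
        ring
      · have z1 : m.choose (ν+1) = 0 := Nat.choose_eq_zero_of_lt (by omega)
        have z2 : m.choose ν = 0 := Nat.choose_eq_zero_of_lt hlt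
        rw [z1, z2]
        push_cast
        ring
    -- conclude by dividing
    have hne1 : (((m:ℝ)+ν+1) * ((m+ν).choose ν)) ≠ 0 := by positivity
    have hne2 : (((m:ℝ)+ν+1+1) * ((m+ν+1).choose (ν+1))) ≠ 0 := by positivity
    have hne3 : ((m:ℝ)+ν+2) ≠ 0 := by positivity
    rw [show m+(ν+1) = m+ν+1 from by ring]
    push_cast
    have hBne : ((m+ν).choose ν : ℝ) ≠ 0 := ne_of_gt hch2
    have hCne : ((m+ν+1).choose (ν+1) : ℝ) ≠ 0 := ne_of_gt hch3
    field_simp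
    linear_combination (-1 : ℝ) * goal'

lemma lem6 (N κ m : ℕ) (hκ : κ ≤ N) (hm : m ≤ N) :
    (-1:ℝ)^κ * (((2*κ).choose κ : ℕ):ℝ)
      * ∑ ν ∈ Icc κ N, (2*(ν:ℝ)+1) * (((ν+κ).choose (ν-κ) : ℕ):ℝ) *
          ((-1:ℝ)^ν * ((m.choose ν : ℕ):ℝ) / (((m:ℝ)+ν+1) * (((m+ν).choose ν : ℕ):ℝ)))
      = if m = κ then 1 else 0 := by
  rcases lt_trichotomy m κ with hlt | heq | hgt
  · rw [if_neg (by omega)]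
    have h0 : ∑ ν ∈ Icc κ N, (2*(ν:ℝ)+1) * (((ν+κ).choose (ν-κ) : ℕ):ℝ) *
          ((-1:ℝ)^ν * ((m.choose ν : ℕ):ℝ) / (((m:ℝ)+ν+1) * (((m+ν).choose ν : ℕ):ℝ))) = 0 := by
      apply Finset.sum_eq_zero
      intro ν hν
      rw [Finset.mem_Icc] at hν
      have : m.choose ν = 0 := Nat.choose_eq_zero_of_lt (by omega)
      rw [this]
      simp
    rw [h0, mul_zero]
  · subst heq
    rw [if_pos rfl]
    rw [Finset.sum_eq_single_of_mem m (Finset.mem_Icc.mpr ⟨le_refl m, hm⟩)]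
    · have h1 : m - m = 0 := by omega
      have h2 : 0 < ((2*m).choose m) := Nat.choose_pos (by omega)
      rw [h1]
      have e1 : m + m = 2*m := by ring
      rw [e1, Nat.choose_zero_right, Nat.choose_self]
      have hne : ((m:ℝ)+m+1) ≠ 0 := by positivity
      have hne2 : (((2*m).choose m : ℕ):ℝ) ≠ 0 := by
        exact_mod_cast Nat.pos_iff_ne_zero.mp h2
      have hp : ((-1:ℝ)^m)^2 = 1 := by
        rw [← pow_mul, mul_comm, pow_mul]; norm_num
      field_simp
      linear_combination (2*(m:ℝ)+1) * hp
    · intro ν hν hne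
      rw [Finset.mem_Icc] at hν
      rcases lt_or_gt_of_ne hne with h | h
      · omega
      · have : m.choose ν = 0 := Nat.choose_eq_zero_of_lt (by omega)
        rw [this]; simp
  · -- m > κ
    rw [if_neg (by omega)]
    obtain ⟨d, rfl⟩ : ∃ d, m = κ + d := ⟨m - κ, by omega⟩
    have hd1 : 1 ≤ d := by omega
    have hsplit : ∑ ν ∈ Icc κ N, (2*(ν:ℝ)+1) * (((ν+κ).choose (ν-κ) : ℕ):ℝ) *
          ((-1:ℝ)^ν * (((κ+d).choose ν : ℕ):ℝ) / (((((κ+d):ℕ):ℝ)+ν+1) * ((((κ+d)+ν).choose ν : ℕ):ℝ)))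
        = ∑ ν ∈ Icc κ (κ+d), (2*(ν:ℝ)+1) * (((ν+κ).choose (ν-κ) : ℕ):ℝ) *
          ((-1:ℝ)^ν * (((κ+d).choose ν : ℕ):ℝ) / (((((κ+d):ℕ):ℝ)+ν+1) * ((((κ+d)+ν).choose ν : ℕ):ℝ))) := by
      rw [← Finset.sum_subset (Finset.Icc_subset_Icc_right hm)]
      intro ν hν hν2
      rw [Finset.mem_Icc] at hν hν2
      have : (κ+d).choose ν = 0 := Nat.choose_eq_zero_of_lt (by omega)
      rw [this]
      simp
    rw [hsplit]
    rw [← Finset.Ico_add_one_right_eq_Icc, Finset.sum_Ico_eq_sum_range]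
    have hrange : κ + d + 1 - κ = d + 1 := by omega
    rw [hrange]
    have key : ∀ i ∈ range (d+1),
        (2*((κ+i:ℕ):ℝ)+1) * ((((κ+i)+κ).choose ((κ+i)-κ) : ℕ):ℝ) *
          ((-1:ℝ)^(κ+i) * (((κ+d).choose (κ+i) : ℕ):ℝ) / (((((κ+d):ℕ):ℝ)+((κ+i:ℕ):ℝ)+1) * ((((κ+d)+(κ+i)).choose (κ+i) : ℕ):ℝ)))
        = ((-1:ℝ)^κ * (((κ+d).factorial : ℕ):ℝ)^2 / (((2*κ+2*d+1).factorial : ℕ):ℝ)) *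
            ((-1:ℝ)^i * (((2*κ:ℕ):ℝ)+2*(i:ℝ)+1) * (((2*κ+i).choose i : ℕ):ℝ) * (((2*κ+2*d+1).choose (d-i) : ℕ):ℝ)) := by
      intro i hi
      rw [Finset.mem_range] at hi
      have hi' : i ≤ d := by omega
      have e1 : (κ+i)+κ = 2*κ+i := by ring
      have e2 : (κ+i)-κ = i := by omega
      have e3 : (κ+d)+(κ+i) = 2*κ+d+i := by ring
      rw [e1, e2, e3]
      -- choose as factorial quotients
      have nz1 : (((κ+i).factorial : ℕ):ℝ) ≠ 0 := by exact_mod_cast Nat.factorial_ne_zero _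
      have nz2 : (((d-i).factorial : ℕ):ℝ) ≠ 0 := by exact_mod_cast Nat.factorial_ne_zero _
      have nz3 : (((2*κ+d+i).factorial : ℕ):ℝ) ≠ 0 := by exact_mod_cast Nat.factorial_ne_zero _
      have nz4 : (((2*κ+d+i+1).factorial : ℕ):ℝ) ≠ 0 := by exact_mod_cast Nat.factorial_ne_zero _
      have nz5 : (((2*κ+2*d+1).factorial : ℕ):ℝ) ≠ 0 := by exact_mod_cast Nat.factorial_ne_zero _
      have nz6 : (((κ+d).factorial : ℕ):ℝ) ≠ 0 := by exact_mod_cast Nat.factorial_ne_zero _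
      have nzi : (((i).factorial : ℕ):ℝ) ≠ 0 := by exact_mod_cast Nat.factorial_ne_zero _
      have nzk : (((2*κ).factorial : ℕ):ℝ) ≠ 0 := by exact_mod_cast Nat.factorial_ne_zero _
      have c1 : ((((κ+d)).choose (κ+i) : ℕ):ℝ) = ((κ+d).factorial : ℝ) / (((κ+i).factorial : ℝ) * ((d-i).factorial : ℝ)) := by
        rw [eq_div_iff (by exact mul_ne_zero nz1 nz2)]
        have h := Nat.choose_mul_factorial_mul_factorial (show κ+i ≤ κ+d by omega)
        have e : κ+d - (κ+i) = d-i := by omega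
        rw [e] at h
        have := congrArg (Nat.cast : ℕ → ℝ) h
        push_cast at this
        linarith [this]
      have c2 : (((2*κ+d+i).choose (κ+i) : ℕ):ℝ) = ((2*κ+d+i).factorial : ℝ) / (((κ+i).factorial : ℝ) * ((κ+d).factorial : ℝ)) := by
        rw [eq_div_iff (by exact mul_ne_zero nz1 nz6)]
        have h := Nat.choose_mul_factorial_mul_factorial (show κ+i ≤ 2*κ+d+i by omega)
        have e : 2*κ+d+i - (κ+i) = κ+d := by omega
        rw [e] at h
        have := congrArg (Nat.cast : ℕ → ℝ) h
        push_cast at this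
        linarith [this]
      have c3 : (((2*κ+2*d+1).choose (d-i) : ℕ):ℝ) = ((2*κ+2*d+1).factorial : ℝ) / (((d-i).factorial : ℝ) * ((2*κ+d+i+1).factorial : ℝ)) := by
        rw [eq_div_iff (by exact mul_ne_zero nz2 nz4)]
        have h := Nat.choose_mul_factorial_mul_factorial (show d-i ≤ 2*κ+2*d+1 by omega)
        have e : 2*κ+2*d+1 - (d-i) = 2*κ+d+i+1 := by omega
        rw [e] at h
        have := congrArg (Nat.cast : ℕ → ℝ) h
        push_cast at this
        linarith [this]
      have c4 : (((2*κ+i).choose i : ℕ):ℝ) = ((2*κ+i).factorial : ℝ) / (((i).factorial : ℝ) * ((2*κ).factorial : ℝ)) := by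
        rw [eq_div_iff (by exact mul_ne_zero nzi nzk)]
        have h := Nat.choose_mul_factorial_mul_factorial (show i ≤ 2*κ+i by omega)
        have e : 2*κ+i - i = 2*κ := by omega
        rw [e] at h
        have := congrArg (Nat.cast : ℕ → ℝ) h
        push_cast at this
        linarith [this]
      rw [c1, c2, c3, c4]
      have hfs : ((2*κ+d+i+1).factorial : ℝ) = ((((2*κ+d+i):ℕ):ℝ)+1) * ((2*κ+d+i).factorial : ℝ) := by
        have : (2*κ+d+i+1).factorial = (2*κ+d+i+1) * (2*κ+d+i).factorial := Nat.factorial_succ _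
        rw [this]
        push_cast
        ring
      have hden : ((((κ+d):ℕ):ℝ)+((κ+i:ℕ):ℝ)+1) = (((2*κ+d+i):ℕ):ℝ)+1 := by
        push_cast
        ring
      rw [hden, hfs]
      field_simp
      push_cast
      ring
    rw [Finset.sum_congr rfl key, ← Finset.mul_sum, lem3 (2*κ) d hd1, mul_zero, mul_zero]

-- real master lemma
lemma lem7 (N κ m : ℕ) (hκ : κ ≤ N) (hm : m ≤ N) :
    (-1:ℝ)^κ * (((2*κ).choose κ : ℕ):ℝ)
      * ∑ ν ∈ Icc κ N, Real.sqrt (2*(ν:ℝ)+1) * (((ν+κ).choose (ν-κ) : ℕ):ℝ) *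
          (Real.sqrt (2*(ν:ℝ)+1) * ∑ j ∈ range (ν+1), (-1:ℝ)^j * (ν.choose j) * ((ν+j).choose j) / (m+j+1))
      = if m = κ then 1 else 0 := by
  rw [← lem6 N κ m hκ hm]
  congr 1
  apply Finset.sum_congr rfl
  intro ν hν
  rw [lem5 m ν]
  have h1 : Real.sqrt (2*(ν:ℝ)+1) * Real.sqrt (2*(ν:ℝ)+1) = 2*(ν:ℝ)+1 :=
    Real.mul_self_sqrt (by positivity)
  calc Real.sqrt (2*(ν:ℝ)+1) * (((ν+κ).choose (ν-κ) : ℕ):ℝ) *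
          (Real.sqrt (2*(ν:ℝ)+1) * ((-1:ℝ)^ν * (m.choose ν) / ((m+ν+1) * ((m+ν).choose ν))))
      = (Real.sqrt (2*(ν:ℝ)+1) * Real.sqrt (2*(ν:ℝ)+1)) * ((((ν+κ).choose (ν-κ) : ℕ):ℝ) *
          ((-1:ℝ)^ν * (m.choose ν) / ((m+ν+1) * ((m+ν).choose ν)))) := by ring
    _ = _ := by rw [h1]; ring

theorem legendre_coeff_identity (N : ℕ) (a : ℕ → ℂ) (R : ℝ) (hR : 0 < R)
    (ℓ : ℕ → ℝ → ℝ)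
    (hℓ : ∀ ν ξ, ℓ ν ξ = Real.sqrt (2 * ν + 1)
      * ∑ j ∈ Finset.range (ν + 1),
          ((-1 : ℝ) ^ j * (ν.choose j) * ((ν + j).choose j) * ξ ^ j))
    (T : ℂ → ℂ) (hT : ∀ X : ℂ, T X = ∑ κ ∈ Finset.range (N + 1), a κ * X ^ κ)
    (γ : ℕ → ℂ) (hγ : ∀ ν, γ ν = ∫ ξ in (0:ℝ)..1, T ((R : ℂ) * ξ) * (ℓ ν ξ : ℂ)) :
    ∀ κ ∈ Finset.range (N + 1),
      a κ * (R : ℂ) ^ κ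
        = (-1 : ℂ) ^ κ * ((2 * κ).choose κ : ℂ)
            * ∑ ν ∈ Finset.Icc κ N,
                ((Real.sqrt (2 * ν + 1) : ℂ) * ((ν + κ).choose (ν - κ) : ℂ) * γ ν) := by
  intro κ hκ
  rw [Finset.mem_range] at hκ
  have hκ' : κ ≤ N := by omega
  -- monomial integrals
  have hmono : ∀ n : ℕ, (∫ ξ in (0:ℝ)..1, (ξ:ℂ)^n) = 1/((n:ℂ)+1) := by
    intro n
    have heq : (fun ξ:ℝ => (ξ:ℂ)^n) = fun ξ:ℝ => (((ξ^n : ℝ)) : ℂ) := by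
      funext ξ; push_cast; ring
    rw [heq, intervalIntegral.integral_ofReal, integral_pow]
    push_cast
    rw [one_pow, zero_pow (by omega : n+1 ≠ 0)]
    push_cast
    ring
  -- gamma computation
  have hgamma : ∀ ν : ℕ, γ ν = ∑ k ∈ range (N+1), a k * (R:ℂ)^k *
      (((Real.sqrt (2*(ν:ℝ)+1) * ∑ j ∈ range (ν+1), (-1:ℝ)^j * (ν.choose j) * ((ν+j).choose j) / (k+j+1)) : ℝ) : ℂ) := by
    intro ν
    rw [hγ ν]
    have hint : (fun ξ:ℝ => T ((R:ℂ) * ξ) * ((ℓ ν ξ : ℝ) : ℂ)) = fun ξ:ℝ =>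
        ∑ k ∈ range (N+1), ∑ j ∈ range (ν+1),
          (a k * (R:ℂ)^k * ((Real.sqrt (2*(ν:ℝ)+1) : ℝ) : ℂ) *
            ((((-1:ℝ)^j * (ν.choose j) * ((ν+j).choose j) : ℝ)) : ℂ)) * (ξ:ℂ)^(k+j) := by
      funext ξ
      rw [hT, hℓ]
      push_cast
      rw [Finset.sum_mul]
      apply Finset.sum_congr rfl
      intro k _
      rw [Finset.mul_sum, Finset.mul_sum]
      apply Finset.sum_congr rfl
      intro j _
      ring
    rw [hint]
    rw [intervalIntegral.integral_finset_sum]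
    · have hin : ∀ k ∈ range (N+1), (∫ ξ in (0:ℝ)..1, ∑ j ∈ range (ν+1),
          (a k * (R:ℂ)^k * ((Real.sqrt (2*(ν:ℝ)+1) : ℝ) : ℂ) *
            ((((-1:ℝ)^j * (ν.choose j) * ((ν+j).choose j) : ℝ)) : ℂ)) * (ξ:ℂ)^(k+j))
          = a k * (R:ℂ)^k *
            (((Real.sqrt (2*(ν:ℝ)+1) * ∑ j ∈ range (ν+1), (-1:ℝ)^j * (ν.choose j) * ((ν+j).choose j) / (k+j+1)) : ℝ) : ℂ) := by
        intro k _
        rw [intervalIntegral.integral_finset_sum]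
        · push_cast
          rw [Finset.mul_sum, Finset.mul_sum]
          apply Finset.sum_congr rfl
          intro j _
          rw [intervalIntegral.integral_const_mul, hmono (k+j)]
          have hne : ((k:ℂ)+(j:ℂ)+1) ≠ 0 := by
            have h : ((k+j+1 : ℕ) : ℂ) ≠ 0 := Nat.cast_ne_zero.mpr (by omega)
            push_cast at h
            exact h
          push_cast
          field_simp
        · intro j _
          apply Continuous.intervalIntegrable
          exact continuous_const.mul (Complex.continuous_ofReal.pow _)
      exact Finset.sum_congr rfl hin
    · intro k _
      apply ContinuousOn.intervalIntegrable
      apply Continuous.continuousOn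
      apply continuous_finset_sum
      intro j _
      exact continuous_const.mul (Complex.continuous_ofReal.pow _)
  -- master identity over ℂ
  have main : ∀ k ∈ range (N+1),
      ((-1:ℂ)^κ * (((2*κ).choose κ : ℕ) : ℂ)) * ∑ ν ∈ Icc κ N,
        ((Real.sqrt (2*(ν:ℝ)+1) : ℝ) : ℂ) * (((ν+κ).choose (ν-κ) : ℕ) : ℂ) *
          (((Real.sqrt (2*(ν:ℝ)+1) * ∑ j ∈ range (ν+1), (-1:ℝ)^j * (ν.choose j) * ((ν+j).choose j) / (k+j+1)) : ℝ) : ℂ)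
      = if k = κ then 1 else 0 := by
    intro k hk
    rw [Finset.mem_range] at hk
    have h7 := lem7 N κ k hκ' (by omega)
    have hcast : (((-1:ℝ)^κ * (((2*κ).choose κ : ℕ):ℝ)
      * ∑ ν ∈ Icc κ N, Real.sqrt (2*(ν:ℝ)+1) * (((ν+κ).choose (ν-κ) : ℕ):ℝ) *
          (Real.sqrt (2*(ν:ℝ)+1) * ∑ j ∈ range (ν+1), (-1:ℝ)^j * (ν.choose j) * ((ν+j).choose j) / (k+j+1)) : ℝ) : ℂ)
        = ((-1:ℂ)^κ * (((2*κ).choose κ : ℕ) : ℂ)) * ∑ ν ∈ Icc κ N,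
        ((Real.sqrt (2*(ν:ℝ)+1) : ℝ) : ℂ) * (((ν+κ).choose (ν-κ) : ℕ) : ℂ) *
          (((Real.sqrt (2*(ν:ℝ)+1) * ∑ j ∈ range (ν+1), (-1:ℝ)^j * (ν.choose j) * ((ν+j).choose j) / (k+j+1)) : ℝ) : ℂ) := by
      push_cast
      ring
    rw [← hcast, h7]
    split <;> simp
  -- assemble
  have trans : (-1 : ℂ) ^ κ * ((2 * κ).choose κ : ℂ)
            * ∑ ν ∈ Finset.Icc κ N,
                ((Real.sqrt (2 * ν + 1) : ℂ) * ((ν + κ).choose (ν - κ) : ℂ) * γ ν)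
      = ∑ k ∈ range (N+1), (a k * (R:ℂ)^k) *
          (((-1:ℂ)^κ * (((2*κ).choose κ : ℕ) : ℂ)) * ∑ ν ∈ Icc κ N,
            ((Real.sqrt (2*(ν:ℝ)+1) : ℝ) : ℂ) * (((ν+κ).choose (ν-κ) : ℕ) : ℂ) *
              (((Real.sqrt (2*(ν:ℝ)+1) * ∑ j ∈ range (ν+1), (-1:ℝ)^j * (ν.choose j) * ((ν+j).choose j) / (k+j+1)) : ℝ) : ℂ)) := by
    simp only [hgamma]
    simp only [Finset.mul_sum, Finset.sum_mul]
    rw [Finset.sum_comm]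
    apply Finset.sum_congr rfl
    intro ν _
    apply Finset.sum_congr rfl
    intro k _
    push_cast
    ring
  rw [trans, Finset.sum_congr rfl (fun k hk => by rw [main k hk])]
  rw [Finset.sum_eq_single κ]
  · simp
  · intro k _ hne
    simp [hne]
  · intro h
    exact absurd (Finset.mem_range.mpr (by omega)) h
end
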